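/- Let (x(·),p(·),u(·)) be a normal BC-extremal on [0,t_f], i.e. an extremal such that ⟨p(t), F₀(x(t)) + u(t)F₁(x(t))⟩ = 1 for a.e. t, with transversality condition p(t_f) = (0, p₂, 0) and x₃(t_f) > 0. Then p₂ = 1/(c₃x₃(t_f)) > 0, and at every time τ with p₁(τ) = p₃(τ) = 0 (a fold point) the second derivative of the switching function equals Φ̈(τ) = H₀₀₁(x(τ),p(τ)) = c₃c₅c₇p₂ > 0. -/

import Mathlib

open MeasureTheory

noncomputable section

/-- Lie bracket of vector fields on ℝ³: `[F,G](x) = G'(x)F(x) − F'(x)G(x)`. -/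
def lieBracket (F G : (Fin 3 → ℝ) → (Fin 3 → ℝ)) (x : Fin 3 → ℝ) : Fin 3 → ℝ :=
  fderiv ℝ G x (F x) - fderiv ℝ F x (G x)

/-- Drift vector field of the electric vehicle. -/
def F0 (c1 c2 c3 c4 c5 c6 : ℝ) (x : Fin 3 → ℝ) : Fin 3 → ℝ :=
  ![c1 * x 0 + c2 * x 2, c3 * x 2, c4 + c5 * x 0 + c6 * (x 2) ^ 2]

/-- Control vector field of the electric vehicle. -/
def F1 (c7 : ℝ) (_x : Fin 3 → ℝ) : Fin 3 → ℝ := ![c7, 0, 0]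

/-- An extremal of the minimum time problem on `[0, t_f]`: a measurable control
`u` with values in `[-1,1]`, together with an absolutely continuous pair
`(x, p)` (encoded by the integral form of the Hamiltonian ODE) with nonvanishing
adjoint vector, satisfying the maximization condition
`u(t) Φ(t) = |Φ(t)|` a.e., where `Φ(t) = c₇ p₁(t)` is the switching function. -/
structure IsExtremal (c1 c2 c3 c4 c5 c6 c7 tf : ℝ)
    (x p : ℝ → Fin 3 → ℝ) (u : ℝ → ℝ) : Prop where
  measurable_u : Measurable u
  u_mem : ∀ᵐ t ∂(volume.restrict (Set.Icc (0:ℝ) tf)), u t ∈ Set.Icc (-1:ℝ) 1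
  p_ne : ∀ t ∈ Set.Icc (0:ℝ) tf, p t ≠ 0
  cont_x : ContinuousOn x (Set.Icc (0:ℝ) tf)
  cont_p : ContinuousOn p (Set.Icc (0:ℝ) tf)
  ode_x1 : ∀ t ∈ Set.Icc (0:ℝ) tf,
    x t 0 = x 0 0 + ∫ s in (0:ℝ)..t, (c1 * x s 0 + c2 * x s 2 + u s * c7)
  ode_x2 : ∀ t ∈ Set.Icc (0:ℝ) tf,
    x t 1 = x 0 1 + ∫ s in (0:ℝ)..t, (c3 * x s 2)
  ode_x3 : ∀ t ∈ Set.Icc (0:ℝ) tf,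
    x t 2 = x 0 2 + ∫ s in (0:ℝ)..t, (c4 + c5 * x s 0 + c6 * (x s 2) ^ 2)
  ode_p1 : ∀ t ∈ Set.Icc (0:ℝ) tf,
    p t 0 = p 0 0 + ∫ s in (0:ℝ)..t, (-(c1 * p s 0 + c5 * p s 2))
  ode_p2 : ∀ t ∈ Set.Icc (0:ℝ) tf, p t 1 = p 0 1
  ode_p3 : ∀ t ∈ Set.Icc (0:ℝ) tf,
    p t 2 = p 0 2 + ∫ s in (0:ℝ)..t, (-(c2 * p s 0 + c3 * p s 1 + 2 * c6 * x s 2 * p s 2))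
  maximization : ∀ᵐ t ∂(volume.restrict (Set.Icc (0:ℝ) tf)),
    u t * (c7 * p t 0) = |c7 * p t 0|


/-- Projection as a continuous linear map. -/
def pr (i : Fin 3) : (Fin 3 → ℝ) →L[ℝ] ℝ := ContinuousLinearMap.proj i

lemma F0_hasFDerivAt (c1 c2 c3 c4 c5 c6 : ℝ) (x : Fin 3 → ℝ) :
    HasFDerivAt (F0 c1 c2 c3 c4 c5 c6)
      (ContinuousLinearMap.pi
        ![c1 • pr 0 + c2 • pr 2, c3 • pr 2,
          c5 • pr 0 + (2 * c6 * x 2) • pr 2]) x := by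
  have hrw : F0 c1 c2 c3 c4 c5 c6 = fun y (i : Fin 3) =>
      (![fun y : Fin 3 → ℝ => c1 * y 0 + c2 * y 2,
         fun y : Fin 3 → ℝ => c3 * y 2,
         fun y : Fin 3 → ℝ => c4 + c5 * y 0 + c6 * (y 2 * y 2)] i) y := by
    funext y i
    fin_cases i <;> simp [F0, pow_two]
  rw [hrw]
  apply hasFDerivAt_pi.2
  intro i
  fin_cases i
  · simpa [pr] using ((hasFDerivAt_apply 0 x).const_mul c1).fun_add ((hasFDerivAt_apply 2 x).const_mul c2)
  · simpa [pr] using (hasFDerivAt_apply 2 x).const_mul c3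
  · have hsq : HasFDerivAt (fun y : Fin 3 → ℝ => y 2 * y 2)
        ((x 2) • pr 2 + (x 2) • pr 2) x :=
      (hasFDerivAt_apply 2 x).mul (hasFDerivAt_apply 2 x)
    have h := ((hasFDerivAt_const c4 x).fun_add ((hasFDerivAt_apply 0 x).const_mul c5)).fun_add
      (hsq.const_mul c6)
    convert h using 1
    all_goals ext v
    all_goals simp [pr, ContinuousLinearMap.smul_apply]
    all_goals ring

lemma F0_fderiv_apply (c1 c2 c3 c4 c5 c6 : ℝ) (x v : Fin 3 → ℝ) :
    fderiv ℝ (F0 c1 c2 c3 c4 c5 c6) x v =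
      ![c1 * v 0 + c2 * v 2, c3 * v 2, c5 * v 0 + 2 * c6 * x 2 * v 2] := by
  rw [(F0_hasFDerivAt c1 c2 c3 c4 c5 c6 x).fderiv]
  funext i
  fin_cases i <;>
    simp [pr, ContinuousLinearMap.pi_apply, ContinuousLinearMap.smul_apply]

lemma lie01 (c1 c2 c3 c4 c5 c6 c7 : ℝ) :
    lieBracket (F0 c1 c2 c3 c4 c5 c6) (F1 c7) = fun _ => ![-(c1 * c7), 0, -(c5 * c7)] := by
  funext x
  unfold lieBracket
  have h1 : fderiv ℝ (F1 c7) x = 0 := by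
    have : F1 c7 = fun _ : Fin 3 → ℝ => ![c7, 0, 0] := rfl
    rw [this, fderiv_fun_const]
    rfl
  rw [h1, F0_fderiv_apply]
  funext i
  fin_cases i <;> simp [F1]

lemma lie001 (c1 c2 c3 c4 c5 c6 c7 : ℝ) (x : Fin 3 → ℝ) :
    lieBracket (F0 c1 c2 c3 c4 c5 c6) (lieBracket (F0 c1 c2 c3 c4 c5 c6) (F1 c7)) x =
      ![c1 * c1 * c7 + c2 * c5 * c7, c3 * c5 * c7,
        c1 * c5 * c7 + 2 * c6 * x 2 * c5 * c7] := by
  rw [lie01]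
  unfold lieBracket
  rw [fderiv_fun_const, F0_fderiv_apply]
  funext i
  fin_cases i <;> simp <;> ring

/-- For a normal BC-extremal (Hamiltonian level 1 a.e., transversality
`p(t_f) = (0, p₂, 0)`, `x₃(t_f) > 0`) one has `p₂ = 1/(c₃ x₃(t_f)) > 0`, and at
every fold time `τ` (`p₁(τ) = p₃(τ) = 0`) the second derivative of the
switching function equals `H₀₀₁(x(τ),p(τ)) = c₃c₅c₇ p₂ > 0`. -/
theorem stmt11 (c1 c2 c3 c4 c5 c6 c7 tf : ℝ)
    (h1 : c1 < 0) (h2 : c2 < 0) (h3 : 0 < c3) (h4 : c4 < 0)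
    (h5 : 0 < c5) (h6 : c6 < 0) (h7 : 0 < c7) (htf : 0 < tf)
    (x p : ℝ → Fin 3 → ℝ) (u : ℝ → ℝ)
    (hext : IsExtremal c1 c2 c3 c4 c5 c6 c7 tf x p u)
    (hnormal : ∀ᵐ t ∂(volume.restrict (Set.Icc (0:ℝ) tf)),
      ∑ i, p t i * (F0 c1 c2 c3 c4 c5 c6 (x t) i + u t * F1 c7 (x t) i) = 1)
    (p2 : ℝ) (htrans : p tf = ![0, p2, 0]) (hx3 : 0 < x tf 2) :
    p2 = 1 / (c3 * x tf 2) ∧ 0 < p2 ∧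
    ∀ τ ∈ Set.Icc (0:ℝ) tf, p τ 0 = 0 → p τ 2 = 0 →
      (∑ i, p τ i *
          lieBracket (F0 c1 c2 c3 c4 c5 c6)
            (lieBracket (F0 c1 c2 c3 c4 c5 c6) (F1 c7)) (x τ) i)
        = c3 * c5 * c7 * p2 ∧
      0 < c3 * c5 * c7 * p2 := by
  have htfmem : tf ∈ Set.Icc (0:ℝ) tf := ⟨htf.le, le_refl tf⟩
  set g : ℝ → ℝ := fun t => p t 0 * (c1 * x t 0 + c2 * x t 2) + p t 1 * (c3 * x t 2)
    + p t 2 * (c4 + c5 * x t 0 + c6 * (x t 2) ^ 2) + |c7 * p t 0| with hgdef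
  have cp : ∀ i, ContinuousOn (fun t => p t i) (Set.Icc (0:ℝ) tf) :=
    fun i => (continuous_apply i).comp_continuousOn hext.cont_p
  have cx : ∀ i, ContinuousOn (fun t => x t i) (Set.Icc (0:ℝ) tf) :=
    fun i => (continuous_apply i).comp_continuousOn hext.cont_x
  have hgc : ContinuousOn g (Set.Icc (0:ℝ) tf) := by
    refine ((((cp 0).mul (((cx 0).const_smul c1).add ((cx 2).const_smul c2))).add
      ((cp 1).mul ((cx 2).const_smul c3))).add
      ((cp 2).mul ((continuousOn_const.add ((cx 0).const_smul c5)).add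
        (((cx 2).pow 2).const_smul c6)))).add ?_
    exact (((cp 0).const_smul c7).abs)
  have hae : g =ᵐ[volume.restrict (Set.Icc (0:ℝ) tf)] fun _ => 1 := by
    filter_upwards [hnormal, hext.maximization] with t ht1 ht2
    simp only [F0, F1, Fin.sum_univ_three, Matrix.cons_val_zero, Matrix.cons_val_one,
      Matrix.head_cons, Matrix.cons_val_two, Matrix.tail_cons] at ht1
    simp only [hgdef]
    rw [← ht2]
    linarith [ht1]
  have heq : Set.EqOn g (fun _ => 1) (Set.Icc (0:ℝ) tf) := by
    refine Measure.eqOn_of_ae_eq hae hgc continuousOn_const ?_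
    rw [interior_Icc, closure_Ioo htf.ne]
  have hgtf := heq htfmem
  have hp0 : p tf 0 = 0 := by rw [htrans]; simp
  have hp1 : p tf 1 = p2 := by rw [htrans]; simp
  have hp2' : p tf 2 = 0 := by rw [htrans]; simp
  have key : p2 * (c3 * x tf 2) = 1 := by
    have := hgtf
    simp only [hgdef, hp0, hp1, hp2', zero_mul, add_zero, zero_add, mul_zero, abs_zero] at this
    linarith [this]
  have hc3x : (0:ℝ) < c3 * x tf 2 := mul_pos h3 hx3
  have hp2eq : p2 = 1 / (c3 * x tf 2) := by
    field_simp
    linarith [key]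
  have hp2pos : 0 < p2 := by rw [hp2eq]; positivity
  refine ⟨hp2eq, hp2pos, ?_⟩
  intro τ hτ hq0 hq2
  have hq1 : p τ 1 = p2 := by
    rw [hext.ode_p2 τ hτ, ← hext.ode_p2 tf htfmem, hp1]
  refine ⟨?_, by positivity⟩
  rw [lie001]
  simp only [Fin.sum_univ_three, hq0, hq1, hq2, Matrix.cons_val_zero, Matrix.cons_val_one,
    Matrix.head_cons, Matrix.cons_val_two, Matrix.tail_cons]
  ring
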